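/- There exists a dynamic matching market with one woman and countably many men, in which all agents find all partners acceptable, that does not have finite presence and admits no matching chronology stable subject to tenure. -/

import Mathlib

/-- A dynamic matching market: a marriage market (injective `Option ℕ`-valued
rankings encode preference lists of order type at most ω, `none` = unacceptable)
together with integer arrival and departure times for each man; women are always
present. -/
structure DynMarket (M W : Type*) where
  mPref : M → W → Option ℕ
  wPref : W → M → Option ℕ
  mPref_inj : ∀ m w w' r, mPref m w = some r → mPref m w' = some r → w = w'
  wPref_inj : ∀ w m m' r, wPref w m = some r → wPref w m' = some r → m = m'
  arr : M → ℤ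
  dep : M → ℤ
  arr_lt_dep : ∀ m, arr m < dep m

namespace DynMarket

variable {M W : Type*}

/-- Man `m` is on the market at time `t` if `arr m ≤ t < dep m`. -/
def OnMarket (E : DynMarket M W) (m : M) (t : ℤ) : Prop :=
  E.arr m ≤ t ∧ t < E.dep m

/-- A matching chronology: at each time, each man is matched to at most one woman
and each woman to at most one man, and only men currently on the market are matched. -/
def IsChronology (E : DynMarket M W) (μ : ℤ → M → Option W) : Prop :=
  (∀ t m m' w, μ t m = some w → μ t m' = some w → m = m') ∧
  (∀ t m w, μ t m = some w → OnMarket E m t)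

/-- Man `m` strictly prefers woman `w` to the outcome `o`. -/
def ManPrefers (E : DynMarket M W) (m : M) (w : W) (o : Option W) : Prop :=
  ∃ r, E.mPref m w = some r ∧
    (o = none ∨ ∃ w' r', o = some w' ∧ E.mPref m w' = some r' ∧ r < r')

/-- Man `m` weakly prefers outcome `o` to outcome `o'`. -/
def ManWeaklyPrefers (E : DynMarket M W) (m : M) (o o' : Option W) : Prop :=
  o = o' ∨ ∃ w, o = some w ∧ ManPrefers E m w o'

/-- Woman `w` strictly prefers man `m` to her assignment under the one-period
matching `ν`. -/
def WomanPrefers (E : DynMarket M W) (w : W) (m : M) (ν : M → Option W) : Prop :=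
  ∃ r, E.wPref w m = some r ∧
    ((∀ m', ν m' ≠ some w) ∨ ∃ m' r', ν m' = some w ∧ E.wPref w m' = some r' ∧ r < r')

/-- The chronology `μ` is stable subject to tenure: it is a chronology in which no
one is ever matched to an unacceptable partner; every man present at consecutive
times weakly prefers his later match to his earlier one (tenure); and at no time is
there a man-woman pair each strictly preferring the other to their current
assignment, except that a woman whose current partner is also her previous-period
partner cannot participate in a block. -/
def StableSubjectToTenure (E : DynMarket M W) (μ : ℤ → M → Option W) : Prop :=
  IsChronology E μ ∧
  (∀ t m w, μ t m = some w → E.mPref m w ≠ none ∧ E.wPref w m ≠ none) ∧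
  (∀ t m, OnMarket E m t → OnMarket E m (t + 1) →
    ManWeaklyPrefers E m (μ (t + 1) m) (μ t m)) ∧
  (∀ t m w, OnMarket E m t →
    ¬ (ManPrefers E m w (μ t m) ∧ WomanPrefers E w m (μ t) ∧
        ¬ ∃ m', μ t m' = some w ∧ μ (t - 1) m' = some w))

/-- Finite presence: at every time `t`, only finitely many men are on the market at
both `t` and `t + 1`. -/
def FinitePresence (E : DynMarket M W) : Prop :=
  ∀ t : ℤ, {m | OnMarket E m t ∧ OnMarket E m (t + 1)}.Finite

end DynMarket

open DynMarket in
/-- Witness market. -/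
def Ew : DynMarket ℕ Unit where
  mPref := fun _ _ => some 0
  wPref := fun _ m => some m
  mPref_inj := by rintro m ⟨⟩ ⟨⟩ r _ _; rfl
  wPref_inj := by
    intro w m m' r h h'
    simp only [Option.some.injEq] at h h'
    omega
  arr := fun m => -(m + 1)
  dep := fun _ => 0
  arr_lt_dep := by intro m; push_cast; omega

open DynMarket in
/-- There exists a dynamic matching market with one woman and countably many men, in
which all agents find all partners acceptable, that does not have finite presence and
admits no matching chronology stable subject to tenure. -/
theorem dynamic_no_stable_without_finite_presence :
    ∃ E : DynMarket ℕ Unit,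
      (∀ m w, E.mPref m w ≠ none) ∧ (∀ w m, E.wPref w m ≠ none) ∧
      ¬ FinitePresence E ∧
      ¬ ∃ μ : ℤ → ℕ → Option Unit, StableSubjectToTenure E μ := by
  refine ⟨Ew, ?_, ?_, ?_, ?_⟩
  · intro m w; simp [Ew]
  · intro w m; simp [Ew]
  · intro hfin
    have hsub : (Set.Ici 1 : Set ℕ) ⊆
        {m | OnMarket Ew m (-2) ∧ OnMarket Ew m (-2 + 1)} := by
      intro m hm
      simp only [Set.mem_Ici] at hm
      simp only [Set.mem_setOf_eq, DynMarket.OnMarket, Ew]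
      push_cast
      exact ⟨⟨by omega, trivial⟩, by omega, trivial⟩
    exact Set.Ici_infinite 1 ((hfin (-2)).subset hsub)
  · rintro ⟨μ, ⟨huniq, hon⟩, hacc, hten, hblk⟩
    -- the woman is matched at every time t ≤ -1
    have matched : ∀ t : ℤ, t ≤ -1 → ∃ m, μ t m = some () := by
      intro t ht
      by_contra h
      push_neg at h
      have hnone : ∀ m, μ t m = none := by
        intro m
        cases hm : μ t m with
        | none => rfl
        | some u => cases u; exact absurd hm (h m)
      set mt : ℕ := (-t).toNat with hmt
      have h0 : OnMarket Ew mt t := by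
        simp only [DynMarket.OnMarket, Ew]
        constructor
        · have : (mt : ℤ) = -t := by omega
          omega
        · omega
      refine hblk t mt () h0 ⟨⟨0, rfl, Or.inl (hnone mt)⟩, ?_, ?_⟩
      · exact ⟨mt, rfl, Or.inl (fun m' => by rw [hnone m']; simp)⟩
      · rintro ⟨m', hm', -⟩
        rw [hnone m'] at hm'
        exact Option.some_ne_none _ hm'.symm
    -- tenure: a matched man present next period stays matched
    have step : ∀ t : ℤ, t ≤ -2 → ∀ m, μ t m = some () → μ (t + 1) m = some () := by
      intro t ht m hm
      have h1 : OnMarket Ew m t := hon t m () hm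
      simp only [DynMarket.OnMarket, Ew] at h1
      have h2 : OnMarket Ew m (t + 1) := by
        simp only [DynMarket.OnMarket, Ew]; omega
      rcases hten t m (hon t m () hm) h2 with h | ⟨w, hw, -⟩
      · rw [h, hm]
      · cases w; exact hw
    obtain ⟨m, hm⟩ := matched (-1) le_rfl
    set t0 : ℤ := -(m + 2) with ht0
    obtain ⟨m', hm'⟩ := matched t0 (by omega)
    have key : ∀ k : ℕ, (k : ℤ) ≤ m + 1 → μ (t0 + k) m' = some () := by
      intro k
      induction k with
      | zero => intro _; simpa using hm'
      | succ k ih =>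
        intro hk
        push_cast at hk ⊢
        have h1 : μ (t0 + k) m' = some () := ih (by omega)
        have := step (t0 + k) (by omega) m' h1
        convert this using 2
        ring
    have hlast : μ (-1) m' = some () := by
      have := key (m + 1) (by push_cast; omega)
      have he : t0 + ((m : ℤ) + 1) = -1 := by omega
      rwa [Nat.cast_add, Nat.cast_one, he] at this
    have hmm : m' = m := huniq (-1) m' m () hlast hm
    have hOn := hon t0 m' () hm'
    simp only [DynMarket.OnMarket, Ew, hmm] at hOn
    omega
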